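/- Let n ≥ 3, let α, β ∈ ℂⁿ have all entries nonzero, and let x, y ∈ ℂⁿ. Suppose that for every k with 2 ≤ k ≤ n one has ∑_{i=1}^{⌊k/2⌋} (−1)^{i−1} [i, k+1−i]_α = 0, and for every ℓ with 1 ≤ ℓ ≤ n−2 one has ∑_{m=0}^{⌊(ℓ−1)/2⌋} (−1)^m [n−ℓ+m, n−m]_β = 0. Then [j,k]_α = 0 for all j, k with k ≥ j+1 and k ≤ n+1−j, and [j,k]_β = 0 for all j, k with k ≥ j+1 and k > n+1−j. -/

import Mathlib

private lemma pivot0 {u v : ℕ → ℂ} {m a b : ℕ}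
    (hma : u m * v a - u a * v m = 0) (hmb : u m * v b - u b * v m = 0)
    (hm : ¬ (u m = 0 ∧ v m = 0)) : u a * v b - u b * v a = 0 := by
  by_cases hum : u m = 0
  · have hvm : v m ≠ 0 := fun h => hm ⟨hum, h⟩
    have h : v m * (u a * v b - u b * v a) =
        v a * (u m * v b - u b * v m) - v b * (u m * v a - u a * v m) := by ring
    rw [hma, hmb] at h
    simp only [mul_zero, sub_zero] at h
    rcases mul_eq_zero.mp h with h | h
    · exact absurd h hvm
    · exact h
  · have h : u m * (u a * v b - u b * v a) =
        u a * (u m * v b - u b * v m) - u b * (u m * v a - u a * v m) := by ring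
    rw [hma, hmb] at h
    simp only [mul_zero, sub_zero] at h
    rcases mul_eq_zero.mp h with h | h
    · exact absurd h hum
    · exact h

private lemma key (u v : ℕ → ℂ) (K : ℕ) (c : ℕ → ℕ → ℂ)
    (hc : ∀ i j, 1 ≤ i → i < j → i + j ≤ K + 1 → c i j ≠ 0)
    (H : ∀ k, 2 ≤ k → k ≤ K →
      ∑ i ∈ Finset.Icc 1 (k / 2),
        (-1 : ℂ) ^ (i - 1) * (c i (k + 1 - i) * (u i * v (k + 1 - i) - u (k + 1 - i) * v i)) = 0) :
    ∀ s i j, 1 ≤ i → i < j → i + j = s → s ≤ K + 1 → u i * v j - u j * v i = 0 := by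
  intro s
  induction s using Nat.strong_induction_on with
  | _ s IH =>
    intro i j hi hij hsum hsK
    by_cases hA : ∃ i', 1 ≤ i' ∧ i' < i ∧ ¬ (u i' = 0 ∧ v i' = 0)
    · obtain ⟨i', hi'1, hi'i, hw⟩ := hA
      have h1 : u i' * v i - u i * v i' = 0 :=
        IH (i' + i) (by omega) i' i hi'1 hi'i rfl (by omega)
      have h2 : u i' * v j - u j * v i' = 0 :=
        IH (i' + j) (by omega) i' j hi'1 (by omega) rfl (by omega)
      exact pivot0 h1 h2 hw
    · push_neg at hA
      by_cases hwi : u i = 0 ∧ v i = 0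
      · rw [hwi.1, hwi.2]; ring
      · set k := i + j - 1 with hk
        have hk2 : 2 ≤ k := by omega
        have hkK : k ≤ K := by omega
        have h2i : 2 * i ≤ k := by omega
        have himem : i ∈ Finset.Icc 1 (k / 2) := by
          simp only [Finset.mem_Icc]
          exact ⟨hi, Nat.le_div_iff_mul_le two_pos |>.mpr (by omega)⟩
        have hsingle : ∀ i' ∈ Finset.Icc 1 (k / 2), i' ≠ i →
            (-1 : ℂ) ^ (i' - 1) *
              (c i' (k + 1 - i') * (u i' * v (k + 1 - i') - u (k + 1 - i') * v i')) = 0 := by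
          intro i' hmem hne
          simp only [Finset.mem_Icc] at hmem
          have h2i' : 2 * i' ≤ k := by
            have := Nat.le_div_iff_mul_le two_pos |>.mp hmem.2
            omega
          rcases lt_or_gt_of_ne hne with hlt | hgt
          · obtain ⟨h1, h2⟩ := hA i' hmem.1 hlt
            rw [h1, h2]; ring
          · have h1 : u i * v i' - u i' * v i = 0 :=
              IH (i + i') (by omega) i i' hi hgt rfl (by omega)
            have h2 : u i * v (k + 1 - i') - u (k + 1 - i') * v i = 0 :=
              IH (i + (k + 1 - i')) (by omega) i (k + 1 - i') hi (by omega) rfl (by omega)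
            rw [pivot0 h1 h2 hwi]; ring
        have hsum0 := H k hk2 hkK
        rw [Finset.sum_eq_single_of_mem i himem hsingle] at hsum0
        have hcne : c i (k + 1 - i) ≠ 0 := hc i (k + 1 - i) hi (by omega) (by omega)
        have hpow : ((-1 : ℂ)) ^ (i - 1) ≠ 0 := by
          simp [pow_ne_zero]
        have hj : k + 1 - i = j := by omega
        rw [hj] at hsum0 hcne
        rcases mul_eq_zero.mp hsum0 with h | h
        · exact absurd h hpow
        rcases mul_eq_zero.mp h with h | h
        · exact absurd h hcne
        · exact h

/-- The bilinear form `[i,j]_γ = x_i y_j − γ_i⁻¹ γ_j x_j y_i`. -/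
noncomputable def br (γ x y : ℕ → ℂ) (i j : ℕ) : ℂ :=
  x i * y j - (γ i)⁻¹ * γ j * (x j * y i)

theorem stmt1 (n : ℕ) (hn : 3 ≤ n) (α β x y : ℕ → ℂ)
    (hα : ∀ i, 1 ≤ i → i ≤ n → α i ≠ 0)
    (hβ : ∀ i, 1 ≤ i → i ≤ n → β i ≠ 0)
    (heqα : ∀ k, 2 ≤ k → k ≤ n →
      ∑ i ∈ Finset.Icc 1 (k / 2), (-1 : ℂ) ^ (i - 1) * br α x y i (k + 1 - i) = 0)
    (heqβ : ∀ l, 1 ≤ l → l ≤ n - 2 →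
      ∑ m ∈ Finset.range ((l - 1) / 2 + 1), (-1 : ℂ) ^ m * br β x y (n - l + m) (n - m) = 0) :
    (∀ j k, 1 ≤ j → j + 1 ≤ k → k ≤ n + 1 - j → br α x y j k = 0) ∧
    (∀ j k, 1 ≤ j → j + 1 ≤ k → k ≤ n → n + 1 - j < k → br β x y j k = 0) := by
  constructor
  · -- α part
    set u : ℕ → ℂ := fun i => α i * x i with hu
    have Hα : ∀ k, 2 ≤ k → k ≤ n →
        ∑ i ∈ Finset.Icc 1 (k / 2),
          (-1 : ℂ) ^ (i - 1) * ((fun i _ => (α i)⁻¹) i (k + 1 - i) *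
            (u i * y (k + 1 - i) - u (k + 1 - i) * y i)) = 0 := by
      intro k hk2 hkn
      rw [← heqα k hk2 hkn]
      apply Finset.sum_congr rfl
      intro i hmem
      simp only [Finset.mem_Icc] at hmem
      have h2i : 2 * i ≤ k := by
        have := Nat.le_div_iff_mul_le two_pos |>.mp hmem.2
        omega
      have hαi : α i ≠ 0 := hα i hmem.1 (by omega)
      congr 1
      simp only [hu, br]
      field_simp
    have hkey := key u y n (fun i _ => (α i)⁻¹)
      (fun i j hi hij hijn => inv_ne_zero (hα i hi (by omega))) Hα
    intro j k hj hjk hkn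
    have hd : u j * y k - u k * y j = 0 :=
      hkey (j + k) j k hj (by omega) rfl (by omega)
    have hαj : α j ≠ 0 := hα j hj (by omega)
    simp only [hu] at hd
    simp only [br]
    field_simp
    linear_combination hd
  · -- β part
    set u : ℕ → ℂ := fun i => β (n + 1 - i) * x (n + 1 - i) with hu
    set v : ℕ → ℂ := fun i => y (n + 1 - i) with hv
    have Hβ : ∀ k, 2 ≤ k → k ≤ n - 1 →
        ∑ i ∈ Finset.Icc 1 (k / 2),
          (-1 : ℂ) ^ (i - 1) * ((fun _ j => -(β (n + 1 - j))⁻¹) i (k + 1 - i) *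
            (u i * v (k + 1 - i) - u (k + 1 - i) * v i)) = 0 := by
      intro k hk2 hkn
      have hl := heqβ (k - 1) (by omega) (by omega)
      rw [← hl]
      apply Finset.sum_nbij' (fun a => a - 1) (fun m => m + 1)
      · intro a ha
        simp only [Finset.mem_Icc] at ha
        have h2a : 2 * a ≤ k := by
          have := Nat.le_div_iff_mul_le two_pos |>.mp ha.2
          omega
        simp only [Finset.mem_range]
        omega
      · intro m hm
        simp only [Finset.mem_range] at hm
        simp only [Finset.mem_Icc]
        constructor
        · omega
        · exact Nat.le_div_iff_mul_le two_pos |>.mpr (by omega)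
      · intro a ha
        simp only [Finset.mem_Icc] at ha
        omega
      · intro m _
        omega
      intro a ha
      simp only [Finset.mem_Icc] at ha
      have h2a : 2 * a ≤ k := by
        have := Nat.le_div_iff_mul_le two_pos |>.mp ha.2
        omega
      obtain ⟨m, rfl⟩ : ∃ m, a = 1 + m := ⟨a - 1, by omega⟩
      have hmem : m < (k - 1 - 1) / 2 + 1 := by omega
      have h2m : 2 * m ≤ k - 2 := by omega
      have e0 : 1 + m - 1 = m := by omega
      rw [e0]
      have e1 : n + 1 - (1 + m) = n - m := by omega
      have e2 : k + 1 - (1 + m) = k - m := by omega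
      have e3 : n + 1 - (k - m) = n - (k - 1) + m := by omega
      have e4 : 1 + m - 1 = m := by omega
      simp only [hu, hv, e1, e2, e3, e4, br]
      have hβp : β (n - (k - 1) + m) ≠ 0 := hβ _ (by omega) (by omega)
      congr 1
      field_simp
      ring
    have hkey := key u v (n - 1) (fun _ j => -(β (n + 1 - j))⁻¹)
      (fun i j hi hij hijn => neg_ne_zero.mpr (inv_ne_zero (hβ (n + 1 - j) (by omega) (by omega)))) Hβ
    intro j k hj hjk hkn hnjk
    have hd : u (n + 1 - k) * v (n + 1 - j) - u (n + 1 - j) * v (n + 1 - k) = 0 :=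
      hkey ((n + 1 - k) + (n + 1 - j)) (n + 1 - k) (n + 1 - j) (by omega) (by omega) rfl (by omega)
    have e1 : n + 1 - (n + 1 - k) = k := by omega
    have e2 : n + 1 - (n + 1 - j) = j := by omega
    simp only [hu, hv, e1, e2] at hd
    have hβj : β j ≠ 0 := hβ j hj (by omega)
    simp only [br]
    field_simp
    linear_combination -hd
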